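/- (Restriction to W is a surjection onto 𝔰𝔬(W, γ).) If X ∈ 𝔤 has range X ⊆ W, then its restriction to W is γ-skew: α'(X(h♯(α))) + α(X(h♯(α'))) = 0 for all α, α' ∈ V*. Conversely, for every linear map S : W → W that is γ-skew, i.e. α'(S(h♯(α))) + α(S(h♯(α'))) = 0 for all α, α' ∈ V* (where h♯(α) is regarded as an element of W, and S(w) ∈ W is regarded as an element of V), there exists X ∈ 𝔤 with range X ⊆ W and X(w) = S(w) for all w ∈ W. -/

import Mathlib

/-- Membership in the Lie algebra `𝔤`. -/
def InG {V : Type*} [AddCommGroup V] [Module ℝ V]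
    (η : V →ₗ[ℝ] V →ₗ[ℝ] ℝ)
    (h : Module.Dual ℝ V →ₗ[ℝ] Module.Dual ℝ V →ₗ[ℝ] ℝ)
    (X : V →ₗ[ℝ] V) : Prop :=
  (∀ v v' : V, η (X v) v' + η v (X v') = 0) ∧
  (∀ α α' : Module.Dual ℝ V, h (α ∘ₗ X) α' + h α (α' ∘ₗ X) = 0)

/-- The restriction map from `{X ∈ 𝔤 : range X ⊆ W}` to `𝔰𝔬(W, γ)` is
well defined (elements restrict to `γ`-skew maps of `W`) and surjective. -/
theorem restriction_onto_so_W_gamma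
    {V : Type*} [AddCommGroup V] [Module ℝ V] [FiniteDimensional ℝ V]
    (W : Submodule ℝ V)
    (η : V →ₗ[ℝ] V →ₗ[ℝ] ℝ)
    (hη_symm : ∀ v v' : V, η v v' = η v' v)
    (hη_rad : ∀ v : V, (∀ v' : V, η v v' = 0) ↔ v ∈ W)
    (h : Module.Dual ℝ V →ₗ[ℝ] Module.Dual ℝ V →ₗ[ℝ] ℝ)
    (hh_symm : ∀ α α' : Module.Dual ℝ V, h α α' = h α' α)
    (hh_rad : ∀ α : Module.Dual ℝ V,
      (∀ α' : Module.Dual ℝ V, h α α' = 0) ↔ α ∈ W.dualAnnihilator)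
    (hs : Module.Dual ℝ V →ₗ[ℝ] V)
    (hhs : ∀ α β : Module.Dual ℝ V, β (hs α) = h β α)
    (hs_mem : ∀ α : Module.Dual ℝ V, hs α ∈ W)
    (hs_surj : ∀ w : V, w ∈ W → ∃ α : Module.Dual ℝ V, hs α = w) :
    (∀ X : V →ₗ[ℝ] V, InG η h X → LinearMap.range X ≤ W →
      ∀ α α' : Module.Dual ℝ V, α' (X (hs α)) + α (X (hs α')) = 0) ∧
    (∀ S : W →ₗ[ℝ] W,
      (∀ α α' : Module.Dual ℝ V,
        α' (S ⟨hs α, hs_mem α⟩ : V) + α (S ⟨hs α', hs_mem α'⟩ : V) = 0) →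
      ∃ X : V →ₗ[ℝ] V, InG η h X ∧ LinearMap.range X ≤ W ∧
        ∀ w : W, X (w : V) = (S w : V)) := by
  constructor
  · rintro X ⟨-, hX2⟩ - α α'
    have h1 : α' (X (hs α)) = h (α' ∘ₗ X) α := hhs α (α' ∘ₗ X)
    have h2 : α (X (hs α')) = h (α ∘ₗ X) α' := hhs α' (α ∘ₗ X)
    rw [h1, h2, hh_symm (α' ∘ₗ X) α, add_comm]
    exact hX2 α α'
  · intro S hS
    obtain ⟨W', hc⟩ := Submodule.exists_isCompl W
    set X : V →ₗ[ℝ] V := W.subtype ∘ₗ S ∘ₗ W.projectionOnto W' hc with hX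
    have hXW : ∀ w : W, X (w : V) = (S w : V) := by
      intro w
      simp [hX, Submodule.projectionOnto_apply_left]
    have hrange : LinearMap.range X ≤ W := by
      rintro _ ⟨v, rfl⟩
      simp [hX]
    refine ⟨X, ⟨?_, ?_⟩, hrange, hXW⟩
    · intro v v'
      have m1 : X v ∈ W := hrange ⟨v, rfl⟩
      have m2 : X v' ∈ W := hrange ⟨v', rfl⟩
      rw [(hη_rad (X v)).mpr m1 v', hη_symm v (X v'), (hη_rad (X v')).mpr m2 v, add_zero]
    · intro α α'
      have h1 : h (α ∘ₗ X) α' = α (X (hs α')) := (hhs α' (α ∘ₗ X)).symm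
      have h2 : h α (α' ∘ₗ X) = α' (X (hs α)) := by
        rw [hh_symm]; exact (hhs α (α' ∘ₗ X)).symm
      rw [h1, h2]
      have e1 : X (hs α') = (S ⟨hs α', hs_mem α'⟩ : V) := hXW ⟨hs α', hs_mem α'⟩
      have e2 : X (hs α) = (S ⟨hs α, hs_mem α⟩ : V) := hXW ⟨hs α, hs_mem α⟩
      rw [e1, e2, add_comm]
      exact hS α α'
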